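/- Let F = Z/2Z and let V ⊆ F^m be a subspace for some m ≥ 4. Suppose V ∩ F_I is an almost coordinate subspace of F_I for every proper subset I ⊊ {1, ..., m}. Then either V is the 1-dimensional subspace spanned by (1, 1, ..., 1), or V is an almost coordinate subspace of F^m. -/

import Mathlib

instance : Fact (Nat.Prime 2) := ⟨by norm_num⟩

/-- The coordinate subspace `F_I ⊆ F^m`: vectors supported on `I`. -/
def coordSubspace (F : Type) [Field F] (m : ℕ) (I : Set (Fin m)) :
    Submodule F (Fin m → F) where
  carrier := {x | ∀ i, i ∉ I → x i = 0}
  add_mem' := by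
    intro a b ha hb i hi
    simp [ha i hi, hb i hi]
  zero_mem' := fun _ _ => rfl
  smul_mem' := by
    intro c a ha i hi
    simp [ha i hi]

/-- A subspace of `F^m` is coordinate if it is spanned by a subset of the standard
basis vectors, i.e. equals `F_I` for some `I`. -/
def IsCoordinateSubspace (F : Type) [Field F] (m : ℕ)
    (V : Submodule F (Fin m → F)) : Prop :=
  ∃ I : Set (Fin m), V = coordSubspace F m I

/-- `IsAlmostCoordBasis F m V I P` says that the vectors `e_i` for `i ∈ I` together
with `e_j + e_h` for `(j,h) ∈ P` have pairwise distinct indices (all the `i`'s, `j`'s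
and `h`'s are distinct) and form a basis of `V` (they are linearly independent and span
`V`). -/
def IsAlmostCoordBasis (F : Type) [Field F] (m : ℕ)
    (V : Submodule F (Fin m → F)) (I : Finset (Fin m))
    (P : Finset (Fin m × Fin m)) : Prop :=
  ((I.val + P.val.bind fun p => {p.1, p.2}) : Multiset (Fin m)).Nodup ∧
  LinearIndependent F
    (Sum.elim (fun i : ↥I => (Pi.single (i : Fin m) (1 : F) : Fin m → F))
      (fun p : ↥P => Pi.single (p : Fin m × Fin m).1 (1 : F) +
        Pi.single (p : Fin m × Fin m).2 (1 : F))) ∧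
  Submodule.span F (Set.range
    (Sum.elim (fun i : ↥I => (Pi.single (i : Fin m) (1 : F) : Fin m → F))
      (fun p : ↥P => Pi.single (p : Fin m × Fin m).1 (1 : F) +
        Pi.single (p : Fin m × Fin m).2 (1 : F)))) = V

/-- A subspace of `F^m` is almost coordinate if it has an almost coordinate basis. -/
def IsAlmostCoordinate (F : Type) [Field F] (m : ℕ)
    (V : Submodule F (Fin m → F)) : Prop :=
  ∃ I P, IsAlmostCoordBasis F m V I P

-- helpers
lemma zmod2_one {a : ZMod 2} (h : a ≠ 0) : a = 1 := by revert a h; decide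

lemma zmod2_zero {a : ZMod 2} (h : a ≠ 1) : a = 0 := by revert a h; decide

lemma coreLemma (m : ℕ) (V : Submodule (ZMod 2) (Fin m → ZMod 2))
    (h : ∀ I : Set (Fin m), I ≠ Set.univ →
      IsAlmostCoordinate (ZMod 2) m (V ⊓ coordSubspace (ZMod 2) m I))
    {x : Fin m → ZMod 2} (hx : x ∈ V) (l j : Fin m) (hxl : x l = 0) (hxj : x j = 1) :
    (Pi.single j 1 : Fin m → ZMod 2) ∈ V ∨
    ∃ h' : Fin m, h' ≠ j ∧ h' ≠ l ∧
      ((Pi.single j 1 + Pi.single h' 1 : Fin m → ZMod 2) ∈ V) ∧ x h' = 1 ∧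
      ∀ y ∈ V, y l = 0 → y j = y h' := by
  classical
  set I : Set (Fin m) := Set.univ \ {l} with hIdef
  have hIne : I ≠ Set.univ := by
    intro hc
    have : l ∈ I := hc ▸ Set.mem_univ l
    simp [hIdef] at this
  obtain ⟨I₀, P₀, hnd, _hli, hspan⟩ := h I hIne
  set W := V ⊓ coordSubspace (ZMod 2) m I with hWdef
  set fam := (Sum.elim (fun i : ↥I₀ => (Pi.single (i : Fin m) (1 : ZMod 2) : Fin m → ZMod 2))
      (fun p : ↥P₀ => Pi.single (p : Fin m × Fin m).1 (1 : ZMod 2) +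
        Pi.single (p : Fin m × Fin m).2 (1 : ZMod 2))) with hfam
  -- membership criteria
  have memW : ∀ y, y ∈ V → y l = 0 → y ∈ W := by
    intro y hyV hyl
    refine ⟨hyV, ?_⟩
    intro i hi
    have : i = l := by
      by_contra hne
      exact hi ⟨Set.mem_univ i, hne⟩
    rw [this]; exact hyl
  have hxW : x ∈ W := memW x hx hxl
  -- nodup facts
  obtain ⟨hndI, hndB, hdisj⟩ := Multiset.nodup_add.mp hnd
  obtain ⟨hBeach, hBpair⟩ := Multiset.nodup_bind.mp hndB
  have N1 : ∀ p ∈ P₀, p.1 ≠ p.2 := by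
    intro p hp
    have := hBeach p hp
    simpa using this
  have N2 : ∀ i ∈ I₀, ∀ p ∈ P₀, i ≠ p.1 ∧ i ≠ p.2 := by
    intro i hi p hp
    have hiM : i ∈ I₀.val := hi
    have hdl := Multiset.disjoint_left.mp hdisj hiM
    constructor <;> intro he <;> subst he <;> exact hdl (Multiset.mem_bind.mpr ⟨p, hp, by simp⟩)
  have N3 : ∀ p ∈ P₀, ∀ q ∈ P₀, p ≠ q →
      p.1 ≠ q.1 ∧ p.1 ≠ q.2 ∧ p.2 ≠ q.1 ∧ p.2 ≠ q.2 := by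
    intro p hp q hq hne
    have hsym : Symmetric (Function.onFun Disjoint
        (fun p : Fin m × Fin m => ({p.1, p.2} : Multiset (Fin m)))) := by
      intro a b hd
      exact hd.symm
    have hd := (haveI : Std.Symm (Function.onFun Disjoint
        (fun p : Fin m × Fin m => ({p.1, p.2} : Multiset (Fin m)))) :=
        ⟨fun a b h => hsym h⟩; hBpair.forall hp hq hne)
    have hdl : ∀ a, a ∈ ({p.1, p.2} : Multiset (Fin m)) →
        a ∉ ({q.1, q.2} : Multiset (Fin m)) := fun a ha => Multiset.disjoint_left.mp hd ha
    exact ⟨fun he => hdl p.1 (by simp) (by simp [he]),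
      fun he => hdl p.1 (by simp) (by simp [he]),
      fun he => hdl p.2 (by simp) (by simp [he]),
      fun he => hdl p.2 (by simp) (by simp [he])⟩
  -- generators in W
  have memGen : ∀ v ∈ Set.range fam, v ∈ W := by
    rw [← hspan]
    exact fun v hv => Submodule.subset_span hv
  -- Fact A: support
  have factA : ∀ y, y ∈ W → ∀ j', y j' ≠ 0 → j' ∈ I₀ ∨ ∃ p ∈ P₀, j' = p.1 ∨ j' = p.2 := by
    intro y hy
    rw [← hspan] at hy
    induction hy using Submodule.span_induction with
    | mem v hv =>
      obtain ⟨t, rfl⟩ := hv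
      rcases t with ⟨i, hi⟩ | ⟨p, hp⟩
      · intro j' hj'
        left
        have : (Pi.single (i : Fin m) (1 : ZMod 2) : Fin m → ZMod 2) j' ≠ 0 := hj'
        rw [Pi.single_apply] at this
        by_cases he : j' = i
        · rw [he]; exact hi
        · simp [he] at this
      · intro j' hj'
        right
        refine ⟨p, hp, ?_⟩
        have : (Pi.single p.1 (1 : ZMod 2) + Pi.single p.2 (1 : ZMod 2) : Fin m → ZMod 2) j' ≠ 0 := hj'
        rw [Pi.add_apply, Pi.single_apply, Pi.single_apply] at this
        by_contra hc
        push_neg at hc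
        simp [hc.1, hc.2] at this
    | zero => intro j' hj'; simp at hj'
    | add a b _ _ ha hb =>
      intro j' hj'
      by_cases h1 : a j' = 0
      · exact hb j' (by rw [Pi.add_apply, h1, zero_add] at hj'; exact hj')
      · exact ha j' h1
    | smul c a _ ha =>
      intro j' hj'
      apply ha
      intro hc
      rw [Pi.smul_apply, hc, smul_zero] at hj'
      exact hj' rfl
  -- Fact B: constancy on pairs
  have factB : ∀ p ∈ P₀, ∀ y, y ∈ W → y p.1 = y p.2 := by
    intro p hp y hy
    rw [← hspan] at hy
    induction hy using Submodule.span_induction with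
    | mem v hv =>
      obtain ⟨t, rfl⟩ := hv
      rcases t with ⟨i, hi⟩ | ⟨q, hq⟩
      · have hn := N2 i hi p hp
        show (Pi.single (i : Fin m) (1:ZMod 2) : Fin m → ZMod 2) p.1 =
          (Pi.single (i : Fin m) (1:ZMod 2) : Fin m → ZMod 2) p.2
        rw [Pi.single_apply, Pi.single_apply]
        simp [Ne.symm hn.1, Ne.symm hn.2]
      · show (Pi.single q.1 (1:ZMod 2) + Pi.single q.2 (1:ZMod 2) : Fin m → ZMod 2) p.1 =
          (Pi.single q.1 (1:ZMod 2) + Pi.single q.2 (1:ZMod 2) : Fin m → ZMod 2) p.2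
        by_cases he : q = p
        · subst he
          have h12 := N1 q hq
          rw [Pi.add_apply, Pi.add_apply, Pi.single_apply, Pi.single_apply,
            Pi.single_apply, Pi.single_apply]
          simp [h12, Ne.symm h12]
        · have hn := N3 q hq p hp he
          rw [Pi.add_apply, Pi.add_apply, Pi.single_apply, Pi.single_apply,
            Pi.single_apply, Pi.single_apply]
          simp [Ne.symm hn.1, Ne.symm hn.2.1, Ne.symm hn.2.2.1, Ne.symm hn.2.2.2]
    | zero => simp
    | add a b _ _ ha hb => rw [Pi.add_apply, Pi.add_apply, ha, hb]
    | smul c a _ ha => rw [Pi.smul_apply, Pi.smul_apply, ha]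
  -- apply Fact A to x at j
  rcases factA x hxW j (by rw [hxj]; exact one_ne_zero) with hj | ⟨p, hp, hj⟩
  · left
    have : fam (Sum.inl ⟨j, hj⟩) ∈ W := memGen _ ⟨Sum.inl ⟨j, hj⟩, rfl⟩
    exact this.1
  · right
    have hpW : fam (Sum.inr ⟨p, hp⟩) ∈ W := memGen _ ⟨Sum.inr ⟨p, hp⟩, rfl⟩
    have hgV : (Pi.single p.1 1 + Pi.single p.2 1 : Fin m → ZMod 2) ∈ V := hpW.1
    have hp12 := N1 p hp
    have hgl : (Pi.single p.1 1 + Pi.single p.2 1 : Fin m → ZMod 2) l = 0 := by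
      have := hpW.2 l (by simp [hIdef])
      exact this
    have h1ne : p.1 ≠ l := by
      intro he
      rw [← he, Pi.add_apply, Pi.single_apply, Pi.single_apply] at hgl
      simp [hp12, Ne.symm hp12] at hgl
    have h2ne : p.2 ≠ l := by
      intro he
      rw [← he, Pi.add_apply, Pi.single_apply, Pi.single_apply] at hgl
      simp [hp12, Ne.symm hp12] at hgl
    rcases hj with he | he
    · refine ⟨p.2, by rw [he]; exact Ne.symm hp12, h2ne, by rw [he]; exact hgV, ?_, ?_⟩
      · rw [← factB p hp x hxW, ← he, hxj]
      · intro y hyV hyl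
        rw [he]
        exact factB p hp y (memW y hyV hyl)
    · refine ⟨p.1, by rw [he]; exact hp12, h1ne, ?_, ?_, ?_⟩
      · rw [he, add_comm]; exact hgV
      · rw [factB p hp x hxW, ← he, hxj]
      · intro y hyV hyl
        rw [he]
        exact (factB p hp y (memW y hyV hyl)).symm

lemma existsFourth (m : ℕ) (hm : 4 ≤ m) (a b c : Fin m) :
    ∃ l : Fin m, l ≠ a ∧ l ≠ b ∧ l ≠ c := by
  classical
  by_contra hc
  push_neg at hc
  have hsub : (Finset.univ : Finset (Fin m)) ⊆ {a, b, c} := by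
    intro i _
    by_cases h1 : i = a
    · simp [h1]
    · by_cases h2 : i = b
      · simp [h2]
      · simp [hc i h1 h2]
  have h1 := Finset.card_le_card hsub
  have h2 : ({a, b, c} : Finset (Fin m)).card ≤ 3 := by
    apply le_trans (Finset.card_insert_le _ _)
    have := Finset.card_insert_le b ({c} : Finset (Fin m))
    simp at this ⊢
    omega
  simp [Finset.card_univ] at h1
  omega

lemma evradd (m : ℕ) (a b c : Fin m) :
    (Pi.single a (1:ZMod 2) + Pi.single b (1:ZMod 2) : Fin m → ZMod 2) c
      = (if c = a then 1 else 0) + (if c = b then 1 else 0) := by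
  rw [Pi.add_apply, Pi.single_apply, Pi.single_apply]

lemma sepLemma (m : ℕ) (hm : 4 ≤ m) (V : Submodule (ZMod 2) (Fin m → ZMod 2))
    (h : ∀ I : Set (Fin m), I ≠ Set.univ →
      IsAlmostCoordinate (ZMod 2) m (V ⊓ coordSubspace (ZMod 2) m I))
    {j h' : Fin m} (hne : j ≠ h')
    (hg : (Pi.single j 1 + Pi.single h' 1 : Fin m → ZMod 2) ∈ V)
    {z : Fin m → ZMod 2} (hz : z ∈ V) (hzd : z j ≠ z h') :
    (Pi.single j 1 : Fin m → ZMod 2) ∈ V := by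
  classical
  -- WLOG z j = 1 and z h' = 0
  obtain ⟨w, hwV, hwj, hwh⟩ : ∃ w ∈ V, w j = 1 ∧ w h' = 0 := by
    by_cases hzj : z j = 1
    · refine ⟨z, hz, hzj, ?_⟩
      apply zmod2_zero; rw [← hzj]; exact fun hc => hzd hc.symm
    · have hzj0 : z j = 0 := zmod2_zero hzj
      have hzh1 : z h' = 1 := zmod2_one (fun hc => hzd (hzj0.trans hc.symm))
      refine ⟨z + (Pi.single j 1 + Pi.single h' 1), V.add_mem hz hg, ?_, ?_⟩
      · rw [Pi.add_apply, evradd, hzj0]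
        simp [hne]
      · rw [Pi.add_apply, evradd, hzh1]
        simp [Ne.symm hne]
        rfl
  by_cases hcase : ∃ l, l ≠ j ∧ l ≠ h' ∧ w l = 0
  · obtain ⟨l, hlj, hlh, hwl⟩ := hcase
    rcases coreLemma m V h hwV l j hwl hwj with hgood | ⟨h'', hne1, _, _, hwh'', hconst⟩
    · exact hgood
    · exfalso
      have hgl : (Pi.single j 1 + Pi.single h' 1 : Fin m → ZMod 2) l = 0 := by
        rw [evradd]; simp [hlj, hlh]
      have := hconst _ hg hgl
      rw [evradd, evradd] at this
      simp [hne, Ne.symm hne] at this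
      -- this : 1 = if h'' = j .. + if h'' = h''... need to conclude h'' = h'
      by_cases he : h'' = h'
      · rw [he] at hwh''
        rw [hwh] at hwh''
        exact one_ne_zero hwh''.symm
      · simp [hne1, he] at this
  · push_neg at hcase
    -- w is 1 everywhere except j, h'; w h' = 0
    rcases coreLemma m V h hwV h' j hwh hwj with hgood | ⟨h'', hne1, hne2, hgen2, _, _⟩
    · exact hgood
    · obtain ⟨l₂, hl1, hl2, hl3⟩ := existsFourth m hm j h' h''
      have hg2l : (Pi.single j 1 + Pi.single h'' 1 : Fin m → ZMod 2) l₂ = 0 := by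
        rw [evradd]; simp [hl1, hl3]
      have hg2j : (Pi.single j 1 + Pi.single h'' 1 : Fin m → ZMod 2) j = 1 := by
        rw [evradd]; simp [Ne.symm hne1]
      rcases coreLemma m V h hgen2 l₂ j hg2l hg2j with hgood | ⟨h₃, hne31, _, _, hval3, hconst3⟩
      · exact hgood
      · exfalso
        have hh3 : h₃ = h'' := by
          rw [evradd] at hval3
          by_contra hc
          simp [hne31, hc] at hval3
        have hgl : (Pi.single j 1 + Pi.single h' 1 : Fin m → ZMod 2) l₂ = 0 := by
          rw [evradd]; simp [hl1, hl2]
        have := hconst3 _ hg hgl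
        rw [evradd, evradd, hh3] at this
        simp [hne, Ne.symm hne, hne1, hne2] at this

lemma partnerLemma (m : ℕ) (hm : 4 ≤ m) (V : Submodule (ZMod 2) (Fin m → ZMod 2))
    (h : ∀ I : Set (Fin m), I ≠ Set.univ →
      IsAlmostCoordinate (ZMod 2) m (V ⊓ coordSubspace (ZMod 2) m I))
    (hd : ∃ d ∈ V, (∃ k, d k = 1) ∧ (∃ l, d l = 0))
    {x : Fin m → ZMod 2} (hx : x ∈ V) {j : Fin m} (hxj : x j = 1) :
    (Pi.single j 1 : Fin m → ZMod 2) ∈ V ∨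
      ∃ h' : Fin m, h' ≠ j ∧ ((Pi.single j 1 + Pi.single h' 1 : Fin m → ZMod 2) ∈ V) ∧
        ∀ z ∈ V, z j = z h' := by
  classical
  -- get a witness with a zero coordinate
  obtain ⟨x', hx'V, hx'j, l, hx'l⟩ :
      ∃ x' ∈ V, x' j = 1 ∧ ∃ l, x' l = 0 := by
    by_cases hl : ∃ l, x l = 0
    · exact ⟨x, hx, hxj, hl⟩
    · push_neg at hl
      obtain ⟨d, hdV, ⟨k, hdk⟩, ⟨l0, hdl⟩⟩ := hd
      by_cases hdj : d j = 1
      · exact ⟨d, hdV, hdj, l0, hdl⟩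
      · have hdj0 : d j = 0 := zmod2_zero hdj
        refine ⟨x + d, V.add_mem hx hdV, ?_, k, ?_⟩
        · rw [Pi.add_apply, hxj, hdj0, add_zero]
        · rw [Pi.add_apply, hdk, zmod2_one (hl k)]
          decide
  rcases coreLemma m V h hx'V l j hx'l hx'j with hgood | ⟨h', hne1, _, hgen, _, _⟩
  · exact Or.inl hgood
  · by_cases hsep : ∀ z ∈ V, z j = z h'
    · exact Or.inr ⟨h', hne1, hgen, hsep⟩
    · push_neg at hsep
      obtain ⟨z, hzV, hzd⟩ := hsep
      exact Or.inl (sepLemma m hm V h (Ne.symm hne1) hgen hzV hzd)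

lemma zmod2_add_self (a : ZMod 2) : a + a = 0 := by revert a; decide

lemma cancel2 (m : ℕ) (u v : Fin m → ZMod 2) : (u + v) + v = u := by
  funext i
  show (u i + v i) + v i = u i
  rw [add_assoc, zmod2_add_self, add_zero]

lemma mainConstr (m : ℕ) (hm : 4 ≤ m) (V : Submodule (ZMod 2) (Fin m → ZMod 2))
    (h : ∀ I : Set (Fin m), I ≠ Set.univ →
      IsAlmostCoordinate (ZMod 2) m (V ⊓ coordSubspace (ZMod 2) m I))
    (hd : ∃ d ∈ V, (∃ k, d k = 1) ∧ (∃ l, d l = 0)) :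
    IsAlmostCoordinate (ZMod 2) m V := by
  classical
  set G : Finset (Fin m) := Finset.univ.filter
    (fun j => (Pi.single j 1 : Fin m → ZMod 2) ∈ V) with hGdef
  set P : Finset (Fin m × Fin m) := Finset.univ.filter
    (fun p => p.1 < p.2 ∧ ((Pi.single p.1 1 + Pi.single p.2 1 : Fin m → ZMod 2) ∈ V) ∧
      (Pi.single p.1 1 : Fin m → ZMod 2) ∉ V ∧ (Pi.single p.2 1 : Fin m → ZMod 2) ∉ V ∧
      ∀ z ∈ V, z p.1 = z p.2) with hPdef
  have hGmem : ∀ i ∈ G, (Pi.single i 1 : Fin m → ZMod 2) ∈ V := by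
    intro i hi
    rw [hGdef, Finset.mem_filter] at hi
    exact hi.2
  have hPmem : ∀ p ∈ P, p.1 < p.2 ∧
      ((Pi.single p.1 1 + Pi.single p.2 1 : Fin m → ZMod 2) ∈ V) ∧
      (Pi.single p.1 1 : Fin m → ZMod 2) ∉ V ∧ (Pi.single p.2 1 : Fin m → ZMod 2) ∉ V ∧
      ∀ z ∈ V, z p.1 = z p.2 := by
    intro p hp
    rw [hPdef, Finset.mem_filter] at hp
    exact hp.2
  have pdisj : ∀ p ∈ P, ∀ q ∈ P, p ≠ q →
      p.1 ≠ q.1 ∧ p.1 ≠ q.2 ∧ p.2 ≠ q.1 ∧ p.2 ≠ q.2 := by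
    intro p hp q hq hne
    obtain ⟨hplt, _, _, _, hpsim⟩ := hPmem p hp
    obtain ⟨hqlt, hqg, _, _, _⟩ := hPmem q hq
    have hp12 : p.1 ≠ p.2 := ne_of_lt hplt
    have hq12 : q.1 ≠ q.2 := ne_of_lt hqlt
    have hzp := hpsim _ hqg
    rw [evradd, evradd] at hzp
    have key : (p.1 = q.1 ∨ p.1 = q.2) → (p.2 = q.1 ∨ p.2 = q.2) → p = q := by
      intro h1 h2
      rcases h1 with e1 | e1 <;> rcases h2 with e2 | e2
      · exfalso; rw [e1, e2] at hplt; exact lt_irrefl _ hplt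
      · exact Prod.ext e1 e2
      · exfalso; rw [e1, e2] at hplt; exact lt_asymm hqlt hplt
      · exfalso; rw [e1, e2] at hplt; exact lt_irrefl _ hplt
    have himp : (p.1 = q.1 ∨ p.1 = q.2) → (p.2 = q.1 ∨ p.2 = q.2) := by
      intro h1
      by_contra hout
      push_neg at hout
      rcases h1 with e1 | e1 <;>
        simp [e1, hq12, Ne.symm hq12, hout.1, hout.2] at hzp
    have himp2 : (p.2 = q.1 ∨ p.2 = q.2) → (p.1 = q.1 ∨ p.1 = q.2) := by
      intro h2
      by_contra hout
      push_neg at hout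
      rcases h2 with e2 | e2 <;>
        simp [e2, hq12, Ne.symm hq12, hout.1, hout.2] at hzp
    refine ⟨?_, ?_, ?_, ?_⟩ <;> intro he
    · exact hne (key (Or.inl he) (himp (Or.inl he)))
    · exact hne (key (Or.inr he) (himp (Or.inr he)))
    · exact hne (key (himp2 (Or.inl he)) (Or.inl he))
    · exact hne (key (himp2 (Or.inr he)) (Or.inr he))
  have gdisj : ∀ i ∈ G, ∀ p ∈ P, i ≠ p.1 ∧ i ≠ p.2 := by
    intro i hi p hp
    have hgood := hGmem i hi
    obtain ⟨_, _, hp1, hp2, _⟩ := hPmem p hp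
    constructor <;> intro he <;> rw [he] at hgood
    · exact hp1 hgood
    · exact hp2 hgood
  refine ⟨G, P, ?_, ?_, ?_⟩
  · -- nodup
    rw [Multiset.nodup_add]
    refine ⟨G.nodup, ?_, ?_⟩
    · rw [Multiset.nodup_bind]
      constructor
      · intro p hp
        have := (hPmem p (Finset.mem_val.mp hp)).1
        simp [ne_of_lt this]
      · refine Multiset.Nodup.pairwise ?_ P.nodup
        intro p hp q hq hne
        obtain ⟨d1, d2, d3, d4⟩ := pdisj p (Finset.mem_val.mp hp) q (Finset.mem_val.mp hq) hne
        show Disjoint ({p.1, p.2} : Multiset (Fin m)) {q.1, q.2}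
        rw [Multiset.disjoint_left]
        intro e he hc
        simp only [Multiset.insert_eq_cons, Multiset.mem_cons, Multiset.mem_singleton] at he hc
        rcases he with rfl | rfl <;> rcases hc with hc | hc
        · exact d1 hc
        · exact d2 hc
        · exact d3 hc
        · exact d4 hc
    · rw [Multiset.disjoint_left]
      intro a ha hb
      rw [Multiset.mem_bind] at hb
      obtain ⟨p, hp, hmem⟩ := hb
      obtain ⟨h1, h2⟩ := gdisj a (Finset.mem_val.mp ha) p (Finset.mem_val.mp hp)
      simp only [Multiset.insert_eq_cons, Multiset.mem_cons, Multiset.mem_singleton] at hmem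
      rcases hmem with rfl | rfl
      · exact h1 rfl
      · exact h2 rfl
  · -- linear independence
    rw [Fintype.linearIndependent_iff]
    intro g hg i0
    set fam := (Sum.elim (fun i : ↥G => (Pi.single (i : Fin m) (1 : ZMod 2) : Fin m → ZMod 2))
      (fun p : ↥P => Pi.single (p : Fin m × Fin m).1 (1 : ZMod 2) +
        Pi.single (p : Fin m × Fin m).2 (1 : ZMod 2))) with hfam
    set c0 : Fin m := Sum.elim (fun i : ↥G => (i : Fin m))
      (fun p : ↥P => (p : Fin m × Fin m).1) i0 with hc0
    have hev := congrFun hg c0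
    rw [Finset.sum_apply] at hev
    have hone : fam i0 c0 = 1 := by
      rcases i0 with ⟨j, hj⟩ | ⟨p, hp⟩
      · show (Pi.single (j : Fin m) (1 : ZMod 2) : Fin m → ZMod 2) j = 1
        rw [Pi.single_eq_same]
      · show (Pi.single p.1 (1 : ZMod 2) + Pi.single p.2 (1 : ZMod 2) : Fin m → ZMod 2) p.1 = 1
        have := ne_of_lt (hPmem p hp).1
        rw [evradd]
        simp [this, Ne.symm this]
    have hzero : ∀ b : ↥G ⊕ ↥P, b ≠ i0 → fam b c0 = 0 := by
      intro b hb
      rcases b with ⟨j', hj'⟩ | ⟨q, hq⟩ <;> rcases i0 with ⟨j, hj⟩ | ⟨p, hp⟩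
      · have hne : j' ≠ j := by
          intro he
          exact hb (by simp [he])
        show (Pi.single (j' : Fin m) (1 : ZMod 2) : Fin m → ZMod 2) j = 0
        rw [Pi.single_apply]
        simp [Ne.symm hne]
      · have := gdisj j' hj' p hp
        show (Pi.single (j' : Fin m) (1 : ZMod 2) : Fin m → ZMod 2) p.1 = 0
        rw [Pi.single_apply]
        simp [Ne.symm this.1]
      · have := gdisj j hj q hq
        show (Pi.single q.1 (1 : ZMod 2) + Pi.single q.2 (1 : ZMod 2) : Fin m → ZMod 2) j = 0
        rw [evradd]
        simp [this.1, this.2]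
      · have hne : q ≠ p := by
          intro he
          exact hb (by simp [he])
        have := pdisj q hq p hp hne
        show (Pi.single q.1 (1 : ZMod 2) + Pi.single q.2 (1 : ZMod 2) : Fin m → ZMod 2) p.1 = 0
        rw [evradd]
        simp [Ne.symm this.1, Ne.symm this.2.2.1]
    have hsum : (∑ i : ↥G ⊕ ↥P, (g i • fam i) c0) = g i0 * fam i0 c0 := by
      rw [Finset.sum_eq_single i0]
      · rw [Pi.smul_apply, smul_eq_mul]
      · intro b _ hb
        rw [Pi.smul_apply, smul_eq_mul, hzero b hb, mul_zero]
      · intro hni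
        exact absurd (Finset.mem_univ i0) hni
    rw [hsum, hone, mul_one] at hev
    exact hev
  · -- span = V
    apply le_antisymm
    · rw [Submodule.span_le]
      rintro v ⟨i, rfl⟩
      rcases i with ⟨j, hj⟩ | ⟨p, hp⟩
      · exact hGmem j hj
      · exact (hPmem p hp).2.1
    · intro x hx
      have cover : ∀ n : ℕ, ∀ y, y ∈ V →
          (Finset.univ.filter (fun i => y i ≠ 0)).card ≤ n →
          y ∈ Submodule.span (ZMod 2) (Set.range
            (Sum.elim (fun i : ↥G => (Pi.single (i : Fin m) (1 : ZMod 2) : Fin m → ZMod 2))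
              (fun p : ↥P => Pi.single (p : Fin m × Fin m).1 (1 : ZMod 2) +
                Pi.single (p : Fin m × Fin m).2 (1 : ZMod 2)))) := by
        intro n
        induction n with
        | zero =>
          intro y hy hcard
          have hy0 : y = 0 := by
            funext i
            rw [Pi.zero_apply]
            by_contra hne
            have hmem : i ∈ Finset.univ.filter (fun i => y i ≠ 0) := by simp [hne]
            have := Finset.card_pos.mpr ⟨i, hmem⟩
            omega
          rw [hy0]
          exact Submodule.zero_mem _
        | succ n ih =>
          intro y hy hcard
          by_cases h0 : y = 0
          · rw [h0]; exact Submodule.zero_mem _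
          · obtain ⟨k, hk⟩ : ∃ k, y k ≠ 0 := by
              by_contra hc
              push_neg at hc
              exact h0 (funext fun i => hc i)
            have hk1 : y k = 1 := zmod2_one hk
            have hkmem : k ∈ Finset.univ.filter (fun i => y i ≠ 0) := by simp [hk]
            by_cases hgood : (Pi.single k 1 : Fin m → ZMod 2) ∈ V
            · have hy' : y + (Pi.single k 1 : Fin m → ZMod 2) ∈ V := V.add_mem hy hgood
              have hsub : (Finset.univ.filter (fun i => (y + (Pi.single k 1 : Fin m → ZMod 2)) i ≠ 0)) ⊆
                  (Finset.univ.filter (fun i => y i ≠ 0)).erase k := by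
                intro i hi
                simp only [Finset.mem_filter, Finset.mem_univ, true_and] at hi
                rw [Finset.mem_erase]
                by_cases he : i = k
                · exfalso
                  apply hi
                  rw [he, Pi.add_apply, hk1, Pi.single_eq_same]
                  decide
                · refine ⟨he, ?_⟩
                  simp only [Finset.mem_filter, Finset.mem_univ, true_and]
                  intro hc
                  apply hi
                  rw [Pi.add_apply, hc, Pi.single_apply]
                  simp [he]
              have hcard' : (Finset.univ.filter (fun i => (y + (Pi.single k 1 : Fin m → ZMod 2)) i ≠ 0)).card ≤ n := by
                have h1 := Finset.card_le_card hsub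
                have h2 := Finset.card_erase_lt_of_mem hkmem
                omega
              have hyspan := ih (y + (Pi.single k 1 : Fin m → ZMod 2)) hy' hcard'
              have hgspan : (Pi.single k 1 : Fin m → ZMod 2) ∈ Submodule.span (ZMod 2) (Set.range
                  (Sum.elim (fun i : ↥G => (Pi.single (i : Fin m) (1 : ZMod 2) : Fin m → ZMod 2))
                    (fun p : ↥P => Pi.single (p : Fin m × Fin m).1 (1 : ZMod 2) +
                      Pi.single (p : Fin m × Fin m).2 (1 : ZMod 2)))) := by
                apply Submodule.subset_span
                exact ⟨Sum.inl ⟨k, by rw [hGdef, Finset.mem_filter]; exact ⟨Finset.mem_univ _, hgood⟩⟩, rfl⟩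
              have heq : y = (y + (Pi.single k 1 : Fin m → ZMod 2)) + Pi.single k 1 := (cancel2 m y _).symm
              rw [heq]
              exact Submodule.add_mem _ hyspan hgspan
            · rcases partnerLemma m hm V h hd hy hk1 with hg1 | ⟨h', hne, hgen, hsim⟩
              · exact absurd hg1 hgood
              · have hh'V : (Pi.single h' 1 : Fin m → ZMod 2) ∉ V := by
                  intro hc
                  apply hgood
                  have hadd := V.add_mem hgen hc
                  rwa [cancel2 m (Pi.single k 1) (Pi.single h' 1)] at hadd
                have hyh' : y h' = 1 := by rw [← hsim y hy, hk1]
                have hy' : y + (Pi.single k 1 + Pi.single h' 1 : Fin m → ZMod 2) ∈ V := V.add_mem hy hgen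
                have hsub : (Finset.univ.filter
                      (fun i => (y + (Pi.single k 1 + Pi.single h' 1 : Fin m → ZMod 2)) i ≠ 0)) ⊆
                    (Finset.univ.filter (fun i => y i ≠ 0)).erase k := by
                  intro i hi
                  simp only [Finset.mem_filter, Finset.mem_univ, true_and] at hi
                  rw [Finset.mem_erase]
                  by_cases he1 : i = k
                  · exfalso
                    apply hi
                    rw [he1, Pi.add_apply, hk1, evradd]
                    simp [Ne.symm hne]
                    decide
                  · refine ⟨he1, ?_⟩
                    simp only [Finset.mem_filter, Finset.mem_univ, true_and]
                    by_cases he2 : i = h'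
                    · exfalso
                      apply hi
                      rw [he2, Pi.add_apply, hyh', evradd]
                      simp [hne]
                      decide
                    · intro hc
                      apply hi
                      rw [Pi.add_apply, hc, evradd]
                      simp [he1, he2]
                have hcard' : (Finset.univ.filter
                    (fun i => (y + (Pi.single k 1 + Pi.single h' 1 : Fin m → ZMod 2)) i ≠ 0)).card ≤ n := by
                  have h1 := Finset.card_le_card hsub
                  have h2 := Finset.card_erase_lt_of_mem hkmem
                  omega
                have hyspan := ih _ hy' hcard'
                have hqex : ∃ q ∈ P, (Pi.single q.1 (1:ZMod 2) : Fin m → ZMod 2) + Pi.single q.2 1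
                    = Pi.single k 1 + Pi.single h' 1 := by
                  rcases lt_or_gt_of_ne (Ne.symm hne) with hlt | hlt
                  · refine ⟨(k, h'), ?_, rfl⟩
                    rw [hPdef, Finset.mem_filter]
                    exact ⟨Finset.mem_univ _, hlt, hgen, hgood, hh'V, hsim⟩
                  · refine ⟨(h', k), ?_, add_comm _ _⟩
                    rw [hPdef, Finset.mem_filter]
                    refine ⟨Finset.mem_univ _, hlt, ?_, hh'V, hgood, fun z hz => (hsim z hz).symm⟩
                    rw [add_comm]
                    exact hgen
                obtain ⟨q, hqP, hqe⟩ := hqex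
                have hgspan : (Pi.single k 1 + Pi.single h' 1 : Fin m → ZMod 2) ∈
                    Submodule.span (ZMod 2) (Set.range
                    (Sum.elim (fun i : ↥G => (Pi.single (i : Fin m) (1 : ZMod 2) : Fin m → ZMod 2))
                      (fun p : ↥P => Pi.single (p : Fin m × Fin m).1 (1 : ZMod 2) +
                        Pi.single (p : Fin m × Fin m).2 (1 : ZMod 2)))) := by
                  apply Submodule.subset_span
                  exact ⟨Sum.inr ⟨q, hqP⟩, hqe⟩
                have heq : y = (y + (Pi.single k 1 + Pi.single h' 1 : Fin m → ZMod 2)) +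
                    (Pi.single k 1 + Pi.single h' 1) := (cancel2 m y _).symm
                rw [heq]
                exact Submodule.add_mem _ hyspan hgspan
      exact cover _ x hx le_rfl

/-- Let `F = ℤ/2ℤ` and `V ⊆ F^m` a subspace, `m ≥ 4`. If
`V ∩ F_I` is an almost coordinate subspace for every proper subset
`I ⊊ {1, …, m}`, then either `V` is the 1-dimensional subspace spanned by
`(1, 1, …, 1)`, or `V` is an almost coordinate subspace of `F^m`. -/
theorem almostCoordinate_or_span_one (m : ℕ) (hm : 4 ≤ m)
    (V : Submodule (ZMod 2) (Fin m → ZMod 2))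
    (h : ∀ I : Set (Fin m), I ≠ Set.univ →
      IsAlmostCoordinate (ZMod 2) m (V ⊓ coordSubspace (ZMod 2) m I)) :
    V = Submodule.span (ZMod 2) {(fun _ => 1 : Fin m → ZMod 2)} ∨
      IsAlmostCoordinate (ZMod 2) m V := by
  classical
  by_cases hd : ∃ d ∈ V, (∃ k, d k = 1) ∧ (∃ l, d l = 0)
  · exact Or.inr (mainConstr m hm V h hd)
  · push_neg at hd
    have hV01 : ∀ x ∈ V, x = 0 ∨ x = (fun _ => 1 : Fin m → ZMod 2) := by
      intro x hx
      by_cases h1 : ∃ k, x k = 1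
      · right
        funext i
        exact zmod2_one (hd x hx h1 i)
      · left
        push_neg at h1
        funext i
        rw [Pi.zero_apply]
        exact zmod2_zero (h1 i)
    by_cases hone : (fun _ => 1 : Fin m → ZMod 2) ∈ V
    · left
      apply le_antisymm
      · intro x hx
        rcases hV01 x hx with rfl | rfl
        · exact Submodule.zero_mem _
        · exact Submodule.subset_span rfl
      · rw [Submodule.span_le]
        intro v hv
        rw [Set.mem_singleton_iff] at hv
        rw [hv]
        exact hone
    · right
      have hVbot : V = ⊥ := by
        rw [eq_bot_iff]
        intro x hx
        rw [Submodule.mem_bot]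
        rcases hV01 x hx with rfl | rfl
        · rfl
        · exact absurd hx hone
      refine ⟨∅, ∅, ?_, ?_, ?_⟩
      · simp
      · have : IsEmpty (↥(∅ : Finset (Fin m)) ⊕ ↥(∅ : Finset (Fin m × Fin m))) := by
          infer_instance
        exact linearIndependent_empty_type
      · rw [Set.range_eq_empty, Submodule.span_empty, hVbot]
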